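/- arXiv:2511.12802 — 2 statements merged into one kernel-verified Lean document; each statement's English description precedes it below -/
import Mathlib

section
/- Let A be an m×n real matrix of rank r with thin SVD A = UΣVᵀ, and let Φ be an s×m matrix such that (1−ε)‖x‖ ≤ ‖ΦUx‖ ≤ (1+ε)‖x‖ for all x ∈ ℝʳ. Then for every i ∈ {1,…,r}, the i-th singular value of ΦA satisfies (1−ε)·σᵢ(A) ≤ σᵢ(ΦA) ≤ (1+ε)·σᵢ(A). -/
open Matrix

noncomputable def sval {m n : ℕ} (M : Matrix (Fin m) (Fin n) ℝ) (i : Fin n) : ℝ :=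
  let f : Fin n → ℝ :=
    fun j => Real.sqrt ((Matrix.isHermitian_conjTranspose_mul_self M).eigenvalues j)
  (f ∘ Tuple.sort f) i.rev

noncomputable def specNorm {m n : ℕ} (M : Matrix (Fin m) (Fin n) ℝ) : ℝ :=
  ‖(Matrix.toEuclideanLin M).toContinuousLinearMap‖

namespace SvalAux

open Submodule Module

lemma euclid_eig {n : ℕ} {P : Matrix (Fin n) (Fin n) ℝ} (hP : P.IsHermitian) (j : Fin n) :
    toEuclideanLin P (hP.eigenvectorBasis j) = hP.eigenvalues j • hP.eigenvectorBasis j := by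
  ext i
  simpa using congrFun (hP.mulVec_eigenvectorBasis j) i

lemma quad_form_eig {n : ℕ} {P : Matrix (Fin n) (Fin n) ℝ} (hP : P.IsHermitian)
    (x : EuclideanSpace ℝ (Fin n)) :
    inner ℝ x (toEuclideanLin P x)
      = ∑ j, hP.eigenvalues j * (inner ℝ (hP.eigenvectorBasis j) x : ℝ)^2 := by
  have hsym := (Matrix.isHermitian_iff_isSymmetric.1 hP)
  rw [← (hP.eigenvectorBasis).sum_inner_mul_inner x (toEuclideanLin P x)]
  congr 1; ext j
  have h1 : (inner ℝ (hP.eigenvectorBasis j) (toEuclideanLin P x) : ℝ)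
      = hP.eigenvalues j * inner ℝ (hP.eigenvectorBasis j) x := by
    rw [← hsym (hP.eigenvectorBasis j) x, euclid_eig hP j, real_inner_smul_left]
  rw [h1, real_inner_comm x]
  ring

lemma norm_sq_eig {n : ℕ} {P : Matrix (Fin n) (Fin n) ℝ} (hP : P.IsHermitian)
    (x : EuclideanSpace ℝ (Fin n)) :
    ‖x‖^2 = ∑ j, (inner ℝ (hP.eigenvectorBasis j) x : ℝ)^2 := by
  rw [← real_inner_self_eq_norm_sq, ← (hP.eigenvectorBasis).sum_inner_mul_inner x x]
  congr 1; ext j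
  rw [real_inner_comm x]; ring

lemma inner_zero_of_mem_span {E : Type*} [NormedAddCommGroup E] [InnerProductSpace ℝ E]
    {ι : Type*} [Fintype ι] (b : OrthonormalBasis ι ℝ E) (s : Finset ι) {x : E}
    (hx : x ∈ span ℝ (Set.range (fun j : s => b j))) {j : ι} (hj : j ∉ s) :
    (inner ℝ (b j) x : ℝ) = 0 := by
  have : span ℝ (Set.range (fun j : s => b j)) ≤ LinearMap.ker (innerSL ℝ (b j) : E →ₗ[ℝ] ℝ) := by
    rw [span_le]
    rintro _ ⟨k, rfl⟩
    simp only [SetLike.mem_coe, LinearMap.mem_ker]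
    have : ((k : ι) : ι) ≠ j := by rintro rfl; exact hj k.2
    simpa using b.orthonormal.2 (Ne.symm this)
  exact this hx

lemma finrank_span_onb {E : Type*} [NormedAddCommGroup E] [InnerProductSpace ℝ E]
    {ι : Type*} [Fintype ι] (b : OrthonormalBasis ι ℝ E) (s : Finset ι) :
    finrank ℝ (span ℝ (Set.range (fun j : s => b j))) = s.card := by
  have : (Set.range fun j : s => b j) = Set.range (⇑b ∘ (Subtype.val : s → ι)) := rfl
  rw [this, finrank_span_eq_card (b.orthonormal.linearIndependent.comp _ Subtype.val_injective)]
  simp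

lemma exists_ne_zero_mem_inf {E : Type*} [NormedAddCommGroup E] [InnerProductSpace ℝ E]
    [FiniteDimensional ℝ E] (S T : Submodule ℝ E)
    (h : finrank ℝ E < finrank ℝ S + finrank ℝ T) :
    ∃ x : E, x ≠ 0 ∧ x ∈ S ∧ x ∈ T := by
  have h1 := Submodule.finrank_sup_add_finrank_inf_eq S T
  have h2 := Submodule.finrank_le (S ⊔ T)
  have h3 : 0 < finrank ℝ ↥(S ⊓ T) := by omega
  have h4 : S ⊓ T ≠ ⊥ := by
    intro hb
    rw [hb, finrank_bot] at h3
    omega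
  obtain ⟨x, hx, hne⟩ := (Submodule.ne_bot_iff _).1 h4
  exact ⟨x, hne, hx.1, hx.2⟩

lemma rayleigh_ge {n : ℕ} {P : Matrix (Fin n) (Fin n) ℝ} (hP : P.IsHermitian) (i : Fin n)
    {x : EuclideanSpace ℝ (Fin n)}
    (hx : x ∈ span ℝ (Set.range
      (fun j : (Finset.image (Tuple.sort hP.eigenvalues) (Finset.Ici i)) =>
        hP.eigenvectorBasis j))) :
    (hP.eigenvalues ∘ Tuple.sort hP.eigenvalues) i * ‖x‖^2 ≤ inner ℝ x (toEuclideanLin P x) := by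
  rw [quad_form_eig hP x, norm_sq_eig hP x, Finset.mul_sum]
  apply Finset.sum_le_sum
  intro j _
  by_cases hj : j ∈ Finset.image (Tuple.sort hP.eigenvalues) (Finset.Ici i)
  · obtain ⟨k, hk, rfl⟩ := Finset.mem_image.1 hj
    have hmono := Tuple.monotone_sort hP.eigenvalues (Finset.mem_Ici.1 hk)
    exact mul_le_mul_of_nonneg_right hmono (sq_nonneg _)
  · rw [inner_zero_of_mem_span _ _ hx hj]
    simp

lemma rayleigh_le {n : ℕ} {Q : Matrix (Fin n) (Fin n) ℝ} (hQ : Q.IsHermitian) (i : Fin n)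
    {x : EuclideanSpace ℝ (Fin n)}
    (hx : x ∈ span ℝ (Set.range
      (fun j : (Finset.image (Tuple.sort hQ.eigenvalues) (Finset.Iic i)) =>
        hQ.eigenvectorBasis j))) :
    (inner ℝ x (toEuclideanLin Q x) : ℝ) ≤ (hQ.eigenvalues ∘ Tuple.sort hQ.eigenvalues) i * ‖x‖^2 := by
  rw [quad_form_eig hQ x, norm_sq_eig hQ x, Finset.mul_sum]
  apply Finset.sum_le_sum
  intro j _
  by_cases hj : j ∈ Finset.image (Tuple.sort hQ.eigenvalues) (Finset.Iic i)
  · obtain ⟨k, hk, rfl⟩ := Finset.mem_image.1 hj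
    have hmono := Tuple.monotone_sort hQ.eigenvalues (Finset.mem_Iic.1 hk)
    exact mul_le_mul_of_nonneg_right hmono (sq_nonneg _)
  · rw [inner_zero_of_mem_span _ _ hx hj]
    simp

/-- Weyl-type monotonicity for ascending-sorted eigenvalues. -/
lemma weyl {n : ℕ} {P Q : Matrix (Fin n) (Fin n) ℝ} (hP : P.IsHermitian) (hQ : Q.IsHermitian)
    {c : ℝ} (hc : 0 ≤ c)
    (h : ∀ x : EuclideanSpace ℝ (Fin n),
      c * inner ℝ x (toEuclideanLin P x) ≤ (inner ℝ x (toEuclideanLin Q x) : ℝ))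
    (i : Fin n) :
    c * (hP.eigenvalues ∘ Tuple.sort hP.eigenvalues) i
      ≤ (hQ.eigenvalues ∘ Tuple.sort hQ.eigenvalues) i := by
  set sP := Finset.image (Tuple.sort hP.eigenvalues) (Finset.Ici i) with hsP
  set sQ := Finset.image (Tuple.sort hQ.eigenvalues) (Finset.Iic i) with hsQ
  have hcardP : sP.card = n - i := by
    rw [hsP, Finset.card_image_of_injective _ (Equiv.injective _), Fin.card_Ici]
  have hcardQ : sQ.card = i + 1 := by
    rw [hsQ, Finset.card_image_of_injective _ (Equiv.injective _), Fin.card_Iic]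
  obtain ⟨x, hx0, hxP, hxQ⟩ := exists_ne_zero_mem_inf
    (span ℝ (Set.range (fun j : sP => hP.eigenvectorBasis j)))
    (span ℝ (Set.range (fun j : sQ => hQ.eigenvectorBasis j)))
    (by
      rw [finrank_span_onb, finrank_span_onb, hcardP, hcardQ, finrank_euclideanSpace]
      have := i.isLt
      simp only [Fintype.card_fin]
      omega)
  have hn : (0:ℝ) < ‖x‖^2 := by have := norm_pos_iff.2 hx0; positivity
  have h1 := rayleigh_ge hP i hxP
  have h2 := rayleigh_le hQ i hxQ
  have key : c * (hP.eigenvalues ∘ Tuple.sort hP.eigenvalues) i * ‖x‖^2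
      ≤ (hQ.eigenvalues ∘ Tuple.sort hQ.eigenvalues) i * ‖x‖^2 := by
    calc c * (hP.eigenvalues ∘ Tuple.sort hP.eigenvalues) i * ‖x‖^2
        = c * ((hP.eigenvalues ∘ Tuple.sort hP.eigenvalues) i * ‖x‖^2) := by ring
      _ ≤ c * inner ℝ x (toEuclideanLin P x) := mul_le_mul_of_nonneg_left h1 hc
      _ ≤ inner ℝ x (toEuclideanLin Q x) := h x
      _ ≤ _ := h2
  exact le_of_mul_le_mul_right key hn

lemma sqrt_monotone : Monotone Real.sqrt := fun _ _ h => Real.sqrt_le_sqrt h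

lemma sval_eq {m n : ℕ} (M : Matrix (Fin m) (Fin n) ℝ) (i : Fin n) :
    sval M i = Real.sqrt (((Matrix.isHermitian_conjTranspose_mul_self M).eigenvalues ∘
      Tuple.sort (Matrix.isHermitian_conjTranspose_mul_self M).eigenvalues) i.rev) := by
  set g := (Matrix.isHermitian_conjTranspose_mul_self M).eigenvalues with hg
  have key : (fun j => Real.sqrt (g j)) ∘ Tuple.sort g
      = (fun j => Real.sqrt (g j)) ∘ Tuple.sort (fun j => Real.sqrt (g j)) := by
    rw [Tuple.comp_sort_eq_comp_iff_monotone]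
    exact sqrt_monotone.comp (Tuple.monotone_sort g)
  show ((fun j => Real.sqrt (g j)) ∘ Tuple.sort (fun j => Real.sqrt (g j))) i.rev = _
  rw [← key]
  rfl

lemma toEuclideanLin_mul {l m n : ℕ} (M : Matrix (Fin l) (Fin m) ℝ) (N : Matrix (Fin m) (Fin n) ℝ)
    (x : EuclideanSpace ℝ (Fin n)) :
    toEuclideanLin (M * N) x = toEuclideanLin M (toEuclideanLin N x) := by
  simp only [toEuclideanLin_apply, Equiv.apply_symm_apply, mulVec_mulVec]

lemma quad_tmul {m n : ℕ} (M : Matrix (Fin m) (Fin n) ℝ) (x : EuclideanSpace ℝ (Fin n)) :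
    (inner ℝ x (toEuclideanLin (Mᵀ * M) x) : ℝ) = ‖toEuclideanLin M x‖^2 := by
  have hct : Mᵀ = Mᴴ := by ext i j; simp [conjTranspose_apply]
  rw [toEuclideanLin_mul, hct, Matrix.toEuclideanLin_conjTranspose_eq_adjoint,
    LinearMap.adjoint_inner_right, real_inner_self_eq_norm_sq]

lemma norm_toEuclideanLin_orth {m r : ℕ} (U : Matrix (Fin m) (Fin r) ℝ) (hU : Uᵀ * U = 1)
    (y : EuclideanSpace ℝ (Fin r)) : ‖toEuclideanLin U y‖ = ‖y‖ := by
  have h := quad_tmul U y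
  rw [hU] at h
  have h1 : toEuclideanLin (1 : Matrix (Fin r) (Fin r) ℝ) y = y := by
    simp [toEuclideanLin_apply]
  rw [h1, real_inner_self_eq_norm_sq] at h
  have := norm_nonneg (toEuclideanLin U y)
  nlinarith [norm_nonneg y]

lemma eig_tmul_nonneg {m n : ℕ} (M : Matrix (Fin m) (Fin n) ℝ) (j : Fin n) :
    0 ≤ (Matrix.isHermitian_conjTranspose_mul_self M).eigenvalues j := by
  have hct : Mᵀ = Mᴴ := by ext i j; simp [conjTranspose_apply]
  have hps : (Mᵀ * M).PosSemidef := by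
    rw [hct]; exact Matrix.posSemidef_conjTranspose_mul_self M
  exact hps.eigenvalues_nonneg j

end SvalAux

open SvalAux in
theorem stmt0 (m n s r : ℕ) (hrn : r ≤ n) (ε : ℝ) (hε0 : 0 < ε) (hε1 : ε < 1)
    (A : Matrix (Fin m) (Fin n) ℝ) (hrank : A.rank = r)
    (U : Matrix (Fin m) (Fin r) ℝ) (V : Matrix (Fin n) (Fin r) ℝ) (σ : Fin r → ℝ)
    (hU : Uᵀ * U = 1) (hV : Vᵀ * V = 1)
    (hσpos : ∀ i, 0 < σ i) (hσmono : ∀ i j : Fin r, i ≤ j → σ j ≤ σ i)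
    (hSVD : A = U * Matrix.diagonal σ * Vᵀ)
    (Φ : Matrix (Fin s) (Fin m) ℝ)
    (hemb : ∀ x : EuclideanSpace ℝ (Fin r),
      (1 - ε) * ‖x‖ ≤ ‖Matrix.toEuclideanLin (Φ * U) x‖ ∧
      ‖Matrix.toEuclideanLin (Φ * U) x‖ ≤ (1 + ε) * ‖x‖) :
    ∀ i : Fin n, (i : ℕ) < r →
      (1 - ε) * sval A i ≤ sval (Φ * A) i ∧ sval (Φ * A) i ≤ (1 + ε) * sval A i := by
  have hε1' : (0:ℝ) ≤ 1 - ε := by linarith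
  have hε2 : (0:ℝ) ≤ 1 + ε := by linarith
  -- norm comparison for every x
  have hnorm : ∀ x : EuclideanSpace ℝ (Fin n),
      (1 - ε) * ‖toEuclideanLin A x‖ ≤ ‖toEuclideanLin (Φ * A) x‖ ∧
      ‖toEuclideanLin (Φ * A) x‖ ≤ (1 + ε) * ‖toEuclideanLin A x‖ := by
    intro x
    set z : EuclideanSpace ℝ (Fin r) := toEuclideanLin (Matrix.diagonal σ * Vᵀ) x with hz
    have hA : toEuclideanLin A x = toEuclideanLin U z := by
      rw [hSVD, Matrix.mul_assoc, toEuclideanLin_mul]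
    have hPA : toEuclideanLin (Φ * A) x = toEuclideanLin (Φ * U) z := by
      rw [hSVD, show Φ * (U * Matrix.diagonal σ * Vᵀ) = (Φ * U) * (Matrix.diagonal σ * Vᵀ) by
        simp [Matrix.mul_assoc], toEuclideanLin_mul]
    have hAz : ‖toEuclideanLin A x‖ = ‖z‖ := by
      rw [hA, norm_toEuclideanLin_orth U hU]
    obtain ⟨hl, hr⟩ := hemb z
    constructor
    · rw [hAz, hPA]; exact hl
    · rw [hAz, hPA]; exact hr
  -- quadratic-form comparisons
  have hQlow : ∀ x : EuclideanSpace ℝ (Fin n),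
      (1 - ε)^2 * inner ℝ x (toEuclideanLin (Aᵀ * A) x)
        ≤ (inner ℝ x (toEuclideanLin ((Φ * A)ᵀ * (Φ * A)) x) : ℝ) := by
    intro x
    rw [quad_tmul, quad_tmul]
    have h := (hnorm x).1
    have h0 : 0 ≤ (1 - ε) * ‖toEuclideanLin A x‖ := by positivity
    nlinarith [norm_nonneg (toEuclideanLin (Φ * A) x)]
  have hQhigh : ∀ x : EuclideanSpace ℝ (Fin n),
      ((1 + ε)^2)⁻¹ * inner ℝ x (toEuclideanLin ((Φ * A)ᵀ * (Φ * A)) x)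
        ≤ (inner ℝ x (toEuclideanLin (Aᵀ * A) x) : ℝ) := by
    intro x
    rw [quad_tmul, quad_tmul]
    have h := (hnorm x).2
    have hpos : (0:ℝ) < (1 + ε)^2 := by positivity
    rw [inv_mul_le_iff₀ hpos]
    nlinarith [norm_nonneg (toEuclideanLin (Φ * A) x), norm_nonneg (toEuclideanLin A x)]
  intro i _
  set k := i.rev
  set gA := (Matrix.isHermitian_conjTranspose_mul_self A).eigenvalues with hgA
  set gP := (Matrix.isHermitian_conjTranspose_mul_self (Φ * A)).eigenvalues with hgP
  have wlow := weyl (Matrix.isHermitian_conjTranspose_mul_self A)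
    (Matrix.isHermitian_conjTranspose_mul_self (Φ * A)) (by positivity : (0:ℝ) ≤ (1 - ε)^2) hQlow k
  have whigh := weyl (Matrix.isHermitian_conjTranspose_mul_self (Φ * A))
    (Matrix.isHermitian_conjTranspose_mul_self A)
    (by positivity : (0:ℝ) ≤ ((1 + ε)^2)⁻¹) hQhigh k
  set a := (gA ∘ Tuple.sort gA) k with ha
  set p := (gP ∘ Tuple.sort gP) k with hp
  have ha0 : 0 ≤ a := by
    rw [ha]; exact eig_tmul_nonneg A _
  have hp0 : 0 ≤ p := by
    rw [hp]; exact eig_tmul_nonneg (Φ * A) _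
  have hsvA : sval A i = Real.sqrt a := sval_eq A i
  have hsvP : sval (Φ * A) i = Real.sqrt p := sval_eq (Φ * A) i
  constructor
  · rw [hsvA, hsvP]
    calc (1 - ε) * Real.sqrt a = Real.sqrt ((1 - ε)^2 * a) := by
          rw [Real.sqrt_mul (sq_nonneg _), Real.sqrt_sq hε1']
      _ ≤ Real.sqrt p := Real.sqrt_le_sqrt wlow
  · rw [hsvA, hsvP]
    have hle : p ≤ (1 + ε)^2 * a := by
      have hpos : (0:ℝ) < (1 + ε)^2 := by positivity
      rw [inv_mul_le_iff₀ hpos] at whigh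
      linarith [whigh]
    calc Real.sqrt p ≤ Real.sqrt ((1 + ε)^2 * a) := Real.sqrt_le_sqrt hle
      _ = (1 + ε) * Real.sqrt a := by
          rw [Real.sqrt_mul (sq_nonneg _), Real.sqrt_sq hε2]
end

section
/- Under the hypotheses of the balancing construction with κ(A) ≤ κ₀ and subspace-embedding parameter ε ∈ (0,1/4), the balancing operator W satisfies ‖W‖₂ ≤ ((1+ε)/(1−ε))·κ₀. -/
open Matrix

section Helpers
open RealInnerProductSpace

variable {a b : ℕ}

lemma adjT (M : Matrix (Fin a) (Fin b) ℝ) (x : EuclideanSpace ℝ (Fin b)) (y : EuclideanSpace ℝ (Fin a)) :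
    ⟪Matrix.toEuclideanLin M x, y⟫ = ⟪x, Matrix.toEuclideanLin Mᵀ y⟫ := by
  rw [← Matrix.conjTranspose_eq_transpose_of_trivial, Matrix.toEuclideanLin_conjTranspose_eq_adjoint,
    LinearMap.adjoint_inner_right]

lemma mulT {c : ℕ} (M : Matrix (Fin a) (Fin b) ℝ) (N : Matrix (Fin b) (Fin c) ℝ) (x : EuclideanSpace ℝ (Fin c)) :
    Matrix.toEuclideanLin (M * N) x = Matrix.toEuclideanLin M (Matrix.toEuclideanLin N x) := by
  simp [Matrix.toEuclideanLin_apply, Matrix.mulVec_mulVec]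

lemma oneT (x : EuclideanSpace ℝ (Fin a)) : Matrix.toEuclideanLin (1 : Matrix (Fin a) (Fin a) ℝ) x = x := by
  simp [Matrix.toEuclideanLin_apply]

lemma isoT (M : Matrix (Fin a) (Fin b) ℝ) (h : Mᵀ * M = 1) (x : EuclideanSpace ℝ (Fin b)) :
    ‖Matrix.toEuclideanLin M x‖ = ‖x‖ := by
  have h1 : ⟪Matrix.toEuclideanLin M x, Matrix.toEuclideanLin M x⟫ = ⟪x, x⟫ := by
    rw [adjT, ← mulT, h, oneT]
  rw [real_inner_self_eq_norm_sq, real_inner_self_eq_norm_sq] at h1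
  nlinarith [norm_nonneg ((Matrix.toEuclideanLin M) x), norm_nonneg x]

lemma diagT (d : Fin a → ℝ) (x : EuclideanSpace ℝ (Fin a)) (j : Fin a) :
    Matrix.toEuclideanLin (Matrix.diagonal d) x j = d j * x j := by
  simp [Matrix.toEuclideanLin_apply, Matrix.mulVec_diagonal]

lemma diag_upper (d : Fin a → ℝ) (c : ℝ) (hc : 0 ≤ c) (hd : ∀ i, |d i| ≤ c)
    (x : EuclideanSpace ℝ (Fin a)) : ‖Matrix.toEuclideanLin (Matrix.diagonal d) x‖ ≤ c * ‖x‖ := by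
  rw [EuclideanSpace.norm_eq, EuclideanSpace.norm_eq, ← Real.sqrt_sq hc, ← Real.sqrt_mul (sq_nonneg c)]
  apply Real.sqrt_le_sqrt
  rw [Finset.mul_sum]
  apply Finset.sum_le_sum
  intro i _
  rw [diagT]
  have h1 := hd i
  have h2 := abs_nonneg (d i)
  simp only [Real.norm_eq_abs, abs_mul, mul_pow]
  exact mul_le_mul_of_nonneg_right (pow_le_pow_left₀ h2 h1 2) (sq_nonneg _)

lemma diag_lower (d : Fin a → ℝ) (c : ℝ) (hc : 0 ≤ c) (hd : ∀ i, c ≤ |d i|)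
    (x : EuclideanSpace ℝ (Fin a)) : c * ‖x‖ ≤ ‖Matrix.toEuclideanLin (Matrix.diagonal d) x‖ := by
  rw [EuclideanSpace.norm_eq, EuclideanSpace.norm_eq, ← Real.sqrt_sq hc, ← Real.sqrt_mul (sq_nonneg c)]
  apply Real.sqrt_le_sqrt
  rw [Finset.mul_sum]
  apply Finset.sum_le_sum
  intro i _
  rw [diagT]
  have h1 := hd i
  simp only [Real.norm_eq_abs, abs_mul, mul_pow]
  exact mul_le_mul_of_nonneg_right (pow_le_pow_left₀ hc h1 2) (sq_nonneg _)

lemma diag_single (d : Fin a → ℝ) (i : Fin a) :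
    ‖Matrix.toEuclideanLin (Matrix.diagonal d) (EuclideanSpace.single i 1)‖ = |d i| := by
  have h : Matrix.toEuclideanLin (Matrix.diagonal d) (EuclideanSpace.single i 1)
      = EuclideanSpace.single i (d i) := by
    ext j
    rw [diagT]
    by_cases hj : j = i
    · subst hj; simp
    · simp [EuclideanSpace.single_apply, hj]
  rw [h, EuclideanSpace.norm_single, Real.norm_eq_abs]

set_option maxHeartbeats 1000000 in
lemma Wbound {s r : ℕ} (Ut : Matrix (Fin s) (Fin r) ℝ) (hUt : Utᵀ * Ut = 1) (d : Fin r → ℝ) (c : ℝ)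
    (hc : 1 ≤ c) (hd : ∀ i, |d i| ≤ c) (x : EuclideanSpace ℝ (Fin s)) :
    ‖Matrix.toEuclideanLin (Ut * Matrix.diagonal d * Utᵀ + (1 - Ut * Utᵀ)) x‖ ≤ c * ‖x‖ := by
  set y := Matrix.toEuclideanLin Utᵀ x with hy
  set u := Matrix.toEuclideanLin Ut (Matrix.toEuclideanLin (Matrix.diagonal d) y) with hu
  set z := x - Matrix.toEuclideanLin Ut y with hzdef
  have hback : Matrix.toEuclideanLin Utᵀ (Matrix.toEuclideanLin Ut y) = y := by
    rw [← mulT, hUt, oneT]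
  have hTW : Matrix.toEuclideanLin (Ut * Matrix.diagonal d * Utᵀ + (1 - Ut * Utᵀ)) x = u + z := by
    simp only [map_add, LinearMap.add_apply, map_sub, LinearMap.sub_apply, oneT, mulT]
    rfl
  have hz : Matrix.toEuclideanLin Utᵀ z = 0 := by
    rw [hzdef, map_sub, hback, ← hy, sub_self]
  have huz : ⟪u, z⟫ = 0 := by rw [hu, adjT, hz, inner_zero_right]
  have hpz : ⟪Matrix.toEuclideanLin Ut y, z⟫ = 0 := by rw [adjT, hz, inner_zero_right]
  have hx2 : ‖x‖ ^ 2 = ‖y‖ ^ 2 + ‖z‖ ^ 2 := by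
    have hxs : x = Matrix.toEuclideanLin Ut y + z := by rw [hzdef]; abel
    rw [hxs, norm_add_sq_real, hpz, isoT Ut hUt]; ring
  have hw2 : ‖u + z‖ ^ 2 = ‖u‖ ^ 2 + ‖z‖ ^ 2 := by
    rw [norm_add_sq_real, huz]; ring
  have hun : ‖u‖ ≤ c * ‖y‖ := by
    rw [hu, isoT Ut hUt]
    exact diag_upper d c (by linarith) hd y
  rw [hTW]
  have h1 : ‖u‖ ^ 2 ≤ c ^ 2 * ‖y‖ ^ 2 := by nlinarith [norm_nonneg u, norm_nonneg y]
  have h2 : ‖u + z‖ ^ 2 ≤ (c * ‖x‖) ^ 2 := by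
    nlinarith [mul_nonneg (by nlinarith : (0:ℝ) ≤ c ^ 2 - 1) (sq_nonneg ‖z‖)]
  nlinarith [norm_nonneg (u + z), mul_nonneg (by linarith : (0:ℝ) ≤ c) (norm_nonneg x)]

end Helpers

open RealInnerProductSpace in
set_option maxHeartbeats 2000000 in
theorem stmt12 (m n s r : ℕ) (hr : 0 < r) (hrs : r ≤ s)
    (ε κ₀ : ℝ) (hε0 : 0 < ε) (hε : ε < 1/4) (hκ : 1 ≤ κ₀)
    (A : Matrix (Fin m) (Fin n) ℝ) (hrank : A.rank = r)
    (U : Matrix (Fin m) (Fin r) ℝ) (V : Matrix (Fin n) (Fin r) ℝ) (σ : Fin r → ℝ)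
    (hU : Uᵀ * U = 1) (hV : Vᵀ * V = 1)
    (hσpos : ∀ i, 0 < σ i) (hσmono : ∀ i j : Fin r, i ≤ j → σ j ≤ σ i)
    (hSVD : A = U * Matrix.diagonal σ * Vᵀ)
    (hcond : σ ⟨0, hr⟩ ≤ κ₀ * σ ⟨r - 1, by omega⟩)
    (Φ : Matrix (Fin s) (Fin m) ℝ)
    (hemb : ∀ x : EuclideanSpace ℝ (Fin r),
      (1 - ε) * ‖x‖ ≤ ‖Matrix.toEuclideanLin (Φ * U) x‖ ∧
      ‖Matrix.toEuclideanLin (Φ * U) x‖ ≤ (1 + ε) * ‖x‖)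
    (B : Matrix (Fin s) (Fin n) ℝ) (hB : B = Φ * A)
    (Ut : Matrix (Fin s) (Fin r) ℝ) (Vt : Matrix (Fin n) (Fin r) ℝ) (σt : Fin r → ℝ)
    (hUt : Utᵀ * Ut = 1) (hVt : Vtᵀ * Vt = 1)
    (hσtpos : ∀ i, 0 < σt i) (hσtmono : ∀ i j : Fin r, i ≤ j → σt j ≤ σt i)
    (hBSVD : B = Ut * Matrix.diagonal σt * Vtᵀ)
    (gt : ℝ) (hg : gt = (∏ i, σt i) ^ ((1 : ℝ) / r))
    (W : Matrix (Fin s) (Fin s) ℝ)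
    (hW : W = Ut * Matrix.diagonal (fun i => gt / σt i) * Utᵀ + (1 - Ut * Utᵀ)) :
    specNorm W ≤ ((1 + ε) / (1 - ε)) * κ₀ := by
  unfold specNorm
  have hε1 : (0:ℝ) < 1 - ε := by linarith
  set i0 : Fin r := ⟨0, hr⟩ with hi0
  set il : Fin r := ⟨r - 1, by omega⟩ with hil
  set c : ℝ := (1 + ε) / (1 - ε) * κ₀ with hc
  have hc1 : (1:ℝ) ≤ c := by
    have h1 : (1:ℝ) ≤ (1 + ε) / (1 - ε) := by rw [le_div_iff₀ hε1]; linarith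
    nlinarith
  have hc0 : (0:ℝ) < c := lt_of_lt_of_le one_pos hc1
  -- diagonal inverse
  have hDtDti : Matrix.diagonal (fun i => (σt i)⁻¹) * Matrix.diagonal σt = 1 := by
    rw [Matrix.diagonal_mul_diagonal]
    have h : (fun i => (σt i)⁻¹ * σt i) = fun _ => (1:ℝ) :=
      funext fun i => inv_mul_cancel₀ (hσtpos i).ne'
    rw [h, Matrix.diagonal_one]
  -- Vtᵀ = Dti Utᵀ B
  have hVtT : Vtᵀ = Matrix.diagonal (fun i => (σt i)⁻¹) * Utᵀ * B := by
    rw [hBSVD]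
    calc Vtᵀ = (Matrix.diagonal (fun i => (σt i)⁻¹) * Matrix.diagonal σt) * Vtᵀ := by
          rw [hDtDti, Matrix.one_mul]
      _ = Matrix.diagonal (fun i => (σt i)⁻¹) * (Utᵀ * Ut) * Matrix.diagonal σt * Vtᵀ := by
          rw [hUt, Matrix.mul_one]
      _ = Matrix.diagonal (fun i => (σt i)⁻¹) * Utᵀ * (Ut * Matrix.diagonal σt * Vtᵀ) := by
          simp only [Matrix.mul_assoc]
  have hBf : B = (Φ * U) * (Matrix.diagonal σ * Vᵀ) := by
    rw [hB, hSVD]; simp only [Matrix.mul_assoc]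
  set C : Matrix (Fin r) (Fin r) ℝ :=
    Matrix.diagonal σ * (Φ * U)ᵀ * (Ut * Matrix.diagonal (fun i => (σt i)⁻¹)) with hCdef
  have hVtC : Vt = V * C := by
    have h := congrArg Matrix.transpose hVtT
    rw [Matrix.transpose_transpose] at h
    rw [h, hBf, hCdef]
    simp only [Matrix.transpose_mul, Matrix.transpose_transpose, Matrix.diagonal_transpose,
      Matrix.mul_assoc]
  have hCn : ∀ w : EuclideanSpace ℝ (Fin r), ‖Matrix.toEuclideanLin C w‖ = ‖w‖ := by
    intro w
    rw [← isoT V hV, ← mulT, ← hVtC, isoT Vt hVt]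
  have hBVt : B * Vt = Ut * Matrix.diagonal σt := by
    rw [hBSVD]
    simp only [Matrix.mul_assoc]
    rw [hVt, Matrix.mul_one]
  have hBVt2 : B * Vt = (Φ * U) * (Matrix.diagonal σ * C) := by
    rw [hBf, hVtC]
    simp only [Matrix.mul_assoc]
    rw [← Matrix.mul_assoc Vᵀ V C, hV, Matrix.one_mul]
  -- norms of B Vt e_i
  have hnorm1 : ∀ i : Fin r,
      ‖Matrix.toEuclideanLin (B * Vt) (EuclideanSpace.single i 1)‖ = σt i := by
    intro i
    rw [hBVt, mulT, isoT Ut hUt, diag_single]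
    exact abs_of_pos (hσtpos i)
  have hσles : ∀ i, |σ i| ≤ σ i0 := fun i => by
    rw [abs_of_pos (hσpos i)]
    exact hσmono i0 i (Fin.le_def.mpr (Nat.zero_le _))
  have hσgel : ∀ i, σ il ≤ |σ i| := fun i => by
    rw [abs_of_pos (hσpos i)]
    exact hσmono i il (Fin.le_def.mpr (by have := i.isLt; simp [hil]; omega))
  have hCnorm : ∀ i : Fin r,
      ‖Matrix.toEuclideanLin C (EuclideanSpace.single i 1)‖ = 1 := by
    intro i
    rw [hCn]
    simp
  have hup : σt i0 ≤ (1 + ε) * σ i0 := by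
    have h1 := (hemb (Matrix.toEuclideanLin (Matrix.diagonal σ * C) (EuclideanSpace.single i0 1))).2
    rw [← mulT, ← hBVt2, hnorm1 i0] at h1
    have h3 : ‖Matrix.toEuclideanLin (Matrix.diagonal σ * C) (EuclideanSpace.single i0 1)‖ ≤ σ i0 := by
      rw [mulT]
      calc ‖Matrix.toEuclideanLin (Matrix.diagonal σ) (Matrix.toEuclideanLin C (EuclideanSpace.single i0 1))‖
          ≤ σ i0 * ‖Matrix.toEuclideanLin C (EuclideanSpace.single i0 1)‖ :=
            diag_upper σ (σ i0) (hσpos i0).le hσles _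
        _ = σ i0 := by rw [hCnorm, mul_one]
    nlinarith
  have hlo : (1 - ε) * σ il ≤ σt il := by
    have h1 := (hemb (Matrix.toEuclideanLin (Matrix.diagonal σ * C) (EuclideanSpace.single il 1))).1
    rw [← mulT, ← hBVt2, hnorm1 il] at h1
    have h3 : σ il ≤ ‖Matrix.toEuclideanLin (Matrix.diagonal σ * C) (EuclideanSpace.single il 1)‖ := by
      rw [mulT]
      calc σ il = σ il * ‖Matrix.toEuclideanLin C (EuclideanSpace.single il 1)‖ := by
            rw [hCnorm, mul_one]
        _ ≤ _ := diag_lower σ (σ il) (hσpos il).le hσgel _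
    nlinarith
  -- geometric mean bounds
  have hσtles : ∀ i, σt i ≤ σt i0 := fun i => hσtmono i0 i (Fin.le_def.mpr (Nat.zero_le _))
  have hσtgel : ∀ i, σt il ≤ σt i := fun i =>
    hσtmono i il (Fin.le_def.mpr (by have := i.isLt; simp [hil]; omega))
  have hprodpos : 0 < ∏ i, σt i := Finset.prod_pos fun i _ => hσtpos i
  have hgtpos : 0 < gt := by rw [hg]; exact Real.rpow_pos_of_pos hprodpos _
  have hgle : gt ≤ σt i0 := by
    rw [hg]
    have h1 : ∏ i, σt i ≤ σt i0 ^ (r : ℕ) := by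
      calc ∏ i, σt i ≤ ∏ _i : Fin r, σt i0 :=
            Finset.prod_le_prod (fun i _ => (hσtpos i).le) (fun i _ => hσtles i)
        _ = σt i0 ^ (r : ℕ) := by simp
    calc (∏ i, σt i) ^ ((1:ℝ)/r) ≤ (σt i0 ^ (r : ℕ)) ^ ((1:ℝ)/r) :=
          Real.rpow_le_rpow hprodpos.le h1 (by positivity)
      _ = σt i0 := by
          rw [← Real.rpow_natCast (σt i0) r, ← Real.rpow_mul (hσtpos i0).le, mul_one_div,
            div_self (Nat.cast_ne_zero.mpr hr.ne' : (r:ℝ) ≠ 0), Real.rpow_one]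
  have hdbound : ∀ i, |gt / σt i| ≤ c := by
    intro i
    rw [abs_of_pos (div_pos hgtpos (hσtpos i)), div_le_iff₀ (hσtpos i)]
    calc gt ≤ σt i0 := hgle
      _ ≤ (1 + ε) * σ i0 := hup
      _ ≤ (1 + ε) * (κ₀ * σ il) := by nlinarith
      _ = c * ((1 - ε) * σ il) := by rw [hc]; field_simp
      _ ≤ c * σt il := by nlinarith
      _ ≤ c * σt i := by nlinarith [hσtgel i]
  apply ContinuousLinearMap.opNorm_le_bound _ (by linarith)
  intro x
  rw [LinearMap.coe_toContinuousLinearMap', hW]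
  exact Wbound Ut hUt _ c hc1 hdbound x
end
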